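/- Let H_d be the degree-d normalized Hermite polynomial and t ≥ d² sufficiently large. Write H_d((X_1+⋯+X_t)/√t) = H^{ml} + H^{nml}, where H^{ml} collects the multilinear terms (those ∏ H_{d_i}(X_i) with all d_i ∈ {0,1}) in the Hermite multinomial expansion and H^{nml} the rest. Then ‖H^{nml}‖₂² ≤ C d²/t for an absolute constant C, where ‖·‖₂ is the L² norm with respect to the t-dimensional standard Gaussian measure. -/

import Mathlib

open Polynomial MeasureTheory ProbabilityTheory

/-- The standard Gaussian measure `N(0, I_t)` on `ℝ^t`. -/
noncomputable def stdGaussian (t : ℕ) : Measure (Fin t → ℝ) :=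
  Measure.pi fun _ => gaussianReal 0 1

/-- The normalized probabilists' Hermite polynomial `H_r(y) = He_r(y)/√(r!)`. -/
noncomputable def normHermite (r : ℕ) (y : ℝ) : ℝ :=
  (aeval y (Polynomial.hermite r)) / Real.sqrt (r.factorial)

/-- The non-multilinear part `H^{nml}` of the Hermite multinomial expansion of
`H_d((X₁+⋯+X_t)/√t)`: the sum of the terms `∏ᵢ H_{dᵢ}(Xᵢ)` in which some
`dᵢ ≥ 2`. -/
noncomputable def hermiteNml (t d : ℕ) (x : Fin t → ℝ) : ℝ :=
  ∑ m ∈ (Finset.Nat.antidiagonalTuple t d).filter (fun m => ∃ i, 2 ≤ m i),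
    ((t : ℝ) ^ ((d : ℝ) / 2))⁻¹ *
      Real.sqrt ((d.factorial : ℝ) / ∏ i, ((m i).factorial : ℝ)) *
        ∏ i, normHermite (m i) (x i)

open Real Filter


noncomputable def gpdf (x : ℝ) : ℝ := (Real.sqrt (2 * Real.pi))⁻¹ * Real.exp (-(1/2) * x ^ 2)

lemma gpdf_eq (x : ℝ) : gaussianPDFReal 0 1 x = gpdf x := by
  simp only [gaussianPDFReal, gpdf, NNReal.coe_one, mul_one, sub_zero]
  ring_nf

lemma gpdf_nonneg (x : ℝ) : 0 ≤ gpdf x := by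
  have := gaussianPDFReal_nonneg 0 1 x
  rwa [gpdf_eq] at this

lemma measurable_gpdf : Measurable gpdf := by
  simpa [funext gpdf_eq] using measurable_gaussianPDFReal 0 1

lemma gaussianReal_eq : gaussianReal 0 1 =
    MeasureTheory.volume.withDensity fun x => ((gpdf x).toNNReal : ENNReal) := by
  rw [gaussianReal_of_var_ne_zero 0 one_ne_zero, gaussianPDF_def]
  congr 1
  ext x
  rw [gpdf_eq, ENNReal.ofReal]

lemma integral_gaussian_eq (f : ℝ → ℝ) :
    ∫ x, f x ∂(gaussianReal 0 1) = ∫ x, gpdf x * f x := by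
  rw [gaussianReal_eq, integral_withDensity_eq_integral_smul
    (measurable_gpdf.real_toNNReal)]
  congr 1; ext x
  simp [NNReal.smul_def, Real.coe_toNNReal _ (gpdf_nonneg x)]

lemma integrable_gaussian_iff (f : ℝ → ℝ) :
    Integrable f (gaussianReal 0 1) ↔ Integrable (fun x => gpdf x * f x) := by
  rw [gaussianReal_eq, integrable_withDensity_iff_integrable_smul
    (measurable_gpdf.real_toNNReal)]
  constructor <;> intro h <;> refine h.congr (Filter.Eventually.of_forall fun x => ?_) <;>
    simp [NNReal.smul_def, Real.coe_toNNReal _ (gpdf_nonneg x)]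

lemma integrable_pow_gauss (n : ℕ) : Integrable (fun x : ℝ => x ^ n * Real.exp (-(1/2) * x ^ 2)) := by
  have := integrable_rpow_mul_exp_neg_mul_sq (b := 1/2) (by norm_num) (s := (n : ℝ))
    (lt_of_lt_of_le (by norm_num) (Nat.cast_nonneg n))
  simpa [Real.rpow_natCast] using this

lemma integrable_polyexp (p : ℝ[X]) :
    Integrable (fun x : ℝ => eval x p * Real.exp (-(1/2) * x ^ 2)) := by
  have : (fun x : ℝ => eval x p * Real.exp (-(1/2) * x ^ 2)) =
      fun x : ℝ => ∑ k ∈ Finset.range (p.natDegree + 1),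
        coeff p k * (x ^ k * Real.exp (-(1/2) * x ^ 2)) := by
    ext x
    rw [eval_eq_sum_range, Finset.sum_mul]
    congr 1; ext k; ring
  rw [this]
  exact integrable_finset_sum _ fun k _ => (integrable_pow_gauss k).const_mul _

lemma integrable_poly_gauss (p : ℝ[X]) :
    Integrable (fun x => eval x p) (gaussianReal 0 1) := by
  rw [integrable_gaussian_iff]
  have : (fun x => gpdf x * eval x p) =
      fun x => (Real.sqrt (2 * Real.pi))⁻¹ * (eval x p * Real.exp (-(1/2) * x ^ 2)) := by
    ext x; simp [gpdf]; ring
  rw [this]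
  exact (integrable_polyexp p).const_mul _

lemma tendsto_polyexp_atTop (p : ℝ[X]) :
    Tendsto (fun x : ℝ => eval x p * Real.exp (-(1/2) * x ^ 2)) atTop (nhds 0) := by
  have h : ∀ k : ℕ, Tendsto (fun x : ℝ => x ^ k * Real.exp (-(1/2) * x ^ 2)) atTop (nhds 0) := by
    intro k
    have h1 := rpow_mul_exp_neg_mul_sq_isLittleO_exp_neg (b := 1/2) (by norm_num) (k : ℝ)
    have h2 : Tendsto (fun x : ℝ => Real.exp (-(1/2) * x)) atTop (nhds 0) := by
      have := Real.tendsto_exp_atBot.comp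
        (Filter.Tendsto.const_mul_atBot (by norm_num : (0:ℝ) < 1/2) tendsto_neg_atTop_atBot)
      simpa [Function.comp_def, mul_comm] using this
    have := h1.trans_tendsto h2
    simpa [Real.rpow_natCast] using this
  have : (fun x : ℝ => eval x p * Real.exp (-(1/2) * x ^ 2)) =
      fun x : ℝ => ∑ k ∈ Finset.range (p.natDegree + 1),
        coeff p k * (x ^ k * Real.exp (-(1/2) * x ^ 2)) := by
    ext x
    rw [eval_eq_sum_range, Finset.sum_mul]
    congr 1; ext k; ring
  rw [this]
  have := tendsto_finset_sum (Finset.range (p.natDegree + 1))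
    (fun k _ => ((h k).const_mul (coeff p k)))
  simpa using this
lemma tendsto_polyexp_atBot (p : ℝ[X]) :
    Tendsto (fun x : ℝ => eval x p * Real.exp (-(1/2) * x ^ 2)) atBot (nhds 0) := by
  have := (tendsto_polyexp_atTop (p.comp (-X))).comp tendsto_neg_atBot_atTop
  simp only [Function.comp_def, eval_comp, eval_neg, eval_X, neg_neg, neg_sq] at this
  convert this using 2

/-- Gaussian integration by parts for polynomials. -/
lemma gaussian_ibp (p : ℝ[X]) :
    ∫ x, x * eval x p ∂(gaussianReal 0 1) = ∫ x, eval x (derivative p) ∂(gaussianReal 0 1) := by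
  have key : ∫ x : ℝ, (x * eval x p - eval x (derivative p)) * Real.exp (-(1/2) * x ^ 2) = 0 := by
    set F : ℝ → ℝ := fun x => -(eval x p * Real.exp (-(1/2) * x ^ 2)) with hF
    set G : ℝ → ℝ := fun x => (x * eval x p - eval x (derivative p)) * Real.exp (-(1/2) * x ^ 2)
      with hG
    have hderiv : ∀ x : ℝ, HasDerivAt F (G x) x := by
      intro x
      have h1 : HasDerivAt (fun x : ℝ => eval x p) (eval x (derivative p)) x :=
        Polynomial.hasDerivAt p x
      have h2 : HasDerivAt (fun x : ℝ => Real.exp (-(1/2) * x ^ 2))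
          ((-(1/2) * (2 * x)) * Real.exp (-(1/2) * x ^ 2)) x := by
        have hx : HasDerivAt (fun x : ℝ => -(1/2) * x ^ 2) (-(1/2) * (2 * x)) x := by
          simpa using ((hasDerivAt_pow 2 x).const_mul (-(1/2 : ℝ)))
        simpa [mul_comm] using hx.exp
      have := (h1.mul h2).neg
      rw [show G x = -(eval x (derivative p) * Real.exp (-(1/2) * x ^ 2)
          + eval x p * (-(1/2) * (2 * x) * Real.exp (-(1/2) * x ^ 2))) by
        show (x * eval x p - eval x (derivative p)) * Real.exp (-(1/2) * x ^ 2) = _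
        ring]
      exact this
    have hGint : Integrable G := by
      have : G = fun x => eval x (X * p - derivative p) * Real.exp (-(1/2) * x ^ 2) := by
        ext x; simp [hG]
      rw [this]
      exact integrable_polyexp _
    have htop : Tendsto F atTop (nhds 0) := by
      have h := (tendsto_polyexp_atTop p).neg
      rw [neg_zero] at h; exact h
    have hbot : Tendsto F atBot (nhds 0) := by
      have h := (tendsto_polyexp_atBot p).neg
      rw [neg_zero] at h; exact h
    have h1 : ∫ x in Set.Ioi (0:ℝ), G x = 0 - F 0 :=
      integral_Ioi_of_hasDerivAt_of_tendsto (hderiv 0).continuousAt.continuousWithinAt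
        (fun x _ => hderiv x) hGint.integrableOn htop
    have h2 : ∫ x in Set.Iic (0:ℝ), G x = F 0 - 0 :=
      integral_Iic_of_hasDerivAt_of_tendsto (hderiv 0).continuousAt.continuousWithinAt
        (fun x _ => hderiv x) hGint.integrableOn hbot
    rw [← intervalIntegral.integral_Iic_add_Ioi (b := (0:ℝ)) hGint.integrableOn hGint.integrableOn,
      h1, h2]
    ring
  have expand : ∀ q : ℝ[X], ∫ x, eval x q ∂(gaussianReal 0 1) =
      (Real.sqrt (2 * Real.pi))⁻¹ * ∫ x : ℝ, eval x q * Real.exp (-(1/2) * x ^ 2) := by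
    intro q
    rw [integral_gaussian_eq, ← integral_const_mul]
    congr 1; ext x; simp [gpdf]; ring
  have e1 : ∫ x, x * eval x p ∂(gaussianReal 0 1) =
      (Real.sqrt (2 * Real.pi))⁻¹ * ∫ x : ℝ, eval x (X * p) * Real.exp (-(1/2) * x ^ 2) := by
    have := expand (X * p); simpa using this
  have hsub : ∫ x : ℝ, (x * eval x p - eval x (derivative p)) * Real.exp (-(1/2) * x ^ 2)
      = (∫ x : ℝ, eval x (X * p) * Real.exp (-(1/2) * x ^ 2))
        - ∫ x : ℝ, eval x (derivative p) * Real.exp (-(1/2) * x ^ 2) := by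
    rw [← MeasureTheory.integral_sub]
    · congr 1; ext x; simp; ring
    · have := integrable_polyexp (X * p); simpa using this
    · exact integrable_polyexp _
  rw [e1, expand (derivative p)]
  rw [key] at hsub
  have : (∫ x : ℝ, eval x (X * p) * Real.exp (-(1/2) * x ^ 2))
      = ∫ x : ℝ, eval x (derivative p) * Real.exp (-(1/2) * x ^ 2) := by linarith
  rw [this]
lemma derivative_hermite (n : ℕ) :
    derivative (hermite (n + 1)) = (n + 1 : ℕ) * hermite n := by
  induction n with
  | zero => simp [hermite_one, hermite_zero]
  | succ n ih =>
    rw [hermite_succ (n + 1), derivative_sub, derivative_mul, derivative_X, one_mul, ih,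
      derivative_mul, derivative_natCast, zero_mul, zero_add]
    rw [show ((n + 2 : ℕ) : ℤ[X]) * hermite (n + 1) = hermite (n + 1) + (n + 1 : ℕ) *
      hermite (n + 1) from by push_cast; ring, hermite_succ n]
    push_cast
    ring

/-- The real Hermite polynomial. -/
noncomputable def heR (n : ℕ) : ℝ[X] := (hermite n).map (Int.castRingHom ℝ)

lemma derivative_heR (n : ℕ) : derivative (heR (n + 1)) = (n + 1 : ℕ) * heR n := by
  rw [heR, derivative_map, derivative_hermite]
  simp [heR, Polynomial.map_mul]

lemma integrable_x_poly (q : ℝ[X]) :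
    Integrable (fun x : ℝ => x * eval x q) (gaussianReal 0 1) := by
  have h := integrable_poly_gauss (X * q)
  exact h.congr (Filter.Eventually.of_forall fun x => by simp)

lemma heR_zero : heR 0 = 1 := by simp [heR, hermite_zero]

lemma integrable_poly_mul (p q : ℝ[X]) :
    Integrable (fun x => eval x p * eval x q) (gaussianReal 0 1) := by
  simpa using integrable_poly_gauss (p * q)

/-- The key integration-by-parts step for Hermite orthogonality. -/
lemma hermite_step (p : ℝ[X]) (b : ℕ) :
    ∫ x, eval x p * eval x (heR (b + 1)) ∂(gaussianReal 0 1)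
      = ∫ x, eval x (derivative p) * eval x (heR b) ∂(gaussianReal 0 1) := by
  have hd : derivative (heR b) = (derivative (hermite b)).map (Int.castRingHom ℝ) := by
    rw [heR, derivative_map]
  have hsplit : heR (b + 1) = X * heR b - derivative (heR b) := by
    simp only [heR, hd, hermite_succ, Polynomial.map_sub, Polynomial.map_mul, map_X]
    rw [derivative_map]
  calc ∫ x, eval x p * eval x (heR (b + 1)) ∂(gaussianReal 0 1)
      = ∫ x, (x * eval x (p * heR b) - eval x (p * derivative (heR b))) ∂(gaussianReal 0 1) := by
        congr 1; funext x; rw [hsplit]; simp; ring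
    _ = (∫ x, x * eval x (p * heR b) ∂(gaussianReal 0 1))
        - ∫ x, eval x (p * derivative (heR b)) ∂(gaussianReal 0 1) := by
        exact MeasureTheory.integral_sub (integrable_x_poly _) (integrable_poly_gauss _)
    _ = (∫ x, eval x (derivative (p * heR b)) ∂(gaussianReal 0 1))
        - ∫ x, eval x (p * derivative (heR b)) ∂(gaussianReal 0 1) := by
        rw [gaussian_ibp]
    _ = (∫ x, (eval x (derivative p * heR b) + eval x (p * derivative (heR b)))
          ∂(gaussianReal 0 1))
        - ∫ x, eval x (p * derivative (heR b)) ∂(gaussianReal 0 1) := by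
        congr 1
        congr 1
        funext x
        rw [← eval_add, ← derivative_mul]
    _ = ((∫ x, eval x (derivative p * heR b) ∂(gaussianReal 0 1))
          + ∫ x, eval x (p * derivative (heR b)) ∂(gaussianReal 0 1))
        - ∫ x, eval x (p * derivative (heR b)) ∂(gaussianReal 0 1) := by
        rw [MeasureTheory.integral_add (integrable_poly_gauss _) (integrable_poly_gauss _)]
    _ = ∫ x, eval x (derivative p) * eval x (heR b) ∂(gaussianReal 0 1) := by
        rw [add_sub_cancel_right]; congr 1; funext x; simp

lemma hermite_orth (b a : ℕ) :
    ∫ x, eval x (heR a) * eval x (heR b) ∂(gaussianReal 0 1)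
      = if a = b then (a.factorial : ℝ) else 0 := by
  induction b generalizing a with
  | zero =>
    cases a with
    | zero => simp [heR_zero]
    | succ a =>
      rw [if_neg (Nat.succ_ne_zero a)]
      have h := hermite_step 1 a
      simp only [derivative_one, eval_zero, zero_mul, integral_zero, eval_one, one_mul] at h
      calc ∫ x, eval x (heR (a+1)) * eval x (heR 0) ∂(gaussianReal 0 1)
          = ∫ x, eval x (heR (a+1)) ∂(gaussianReal 0 1) := by
            congr 1; funext x; simp [heR_zero]
        _ = 0 := h
  | succ b ih =>
    cases a with
    | zero =>
      rw [if_neg (fun h => (Nat.succ_ne_zero b) h.symm)]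
      have h := hermite_step 1 b
      simp only [derivative_one, eval_zero, zero_mul, integral_zero, eval_one, one_mul] at h
      calc ∫ x, eval x (heR 0) * eval x (heR (b+1)) ∂(gaussianReal 0 1)
          = ∫ x, eval x (heR (b+1)) ∂(gaussianReal 0 1) := by
            congr 1; funext x; simp [heR_zero]
        _ = 0 := h
    | succ a =>
      rw [hermite_step (heR (a+1)) b]
      calc ∫ x, eval x (derivative (heR (a+1))) * eval x (heR b) ∂(gaussianReal 0 1)
          = ∫ x, ((a : ℝ)+1) * (eval x (heR a) * eval x (heR b)) ∂(gaussianReal 0 1) := by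
            congr 1; funext x; rw [derivative_heR]; push_cast; simp; ring
        _ = ((a : ℝ)+1) * ∫ x, eval x (heR a) * eval x (heR b) ∂(gaussianReal 0 1) := by
            rw [MeasureTheory.integral_const_mul]
        _ = if a + 1 = b + 1 then ((a+1).factorial : ℝ) else 0 := by
            rw [ih a]
            by_cases h : a = b
            · subst h
              rw [if_pos rfl, if_pos rfl, Nat.factorial_succ]
              push_cast; ring
            · rw [if_neg h, if_neg (fun h' => h (Nat.succ_injective h')), mul_zero]
lemma normHermite_eval_eq (r : ℕ) (y : ℝ) :
    normHermite r y = eval y (heR r) / Real.sqrt (r.factorial) := by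
  rw [normHermite, heR, eval_map, aeval_def]
  norm_cast

lemma integrable_normHermite_mul (a b : ℕ) :
    Integrable (fun x => normHermite a x * normHermite b x) (gaussianReal 0 1) := by
  have h := ((integrable_poly_mul (heR a) (heR b)).div_const
    (Real.sqrt (a.factorial) * Real.sqrt (b.factorial)))
  exact h.congr (Filter.Eventually.of_forall fun x => by
    simp only [normHermite_eval_eq, div_mul_div_comm])

lemma normHermite_orth (a b : ℕ) :
    ∫ x, normHermite a x * normHermite b x ∂(gaussianReal 0 1)
      = if a = b then 1 else 0 := by
  have e : (fun x => normHermite a x * normHermite b x) = fun x =>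
      (eval x (heR a) * eval x (heR b)) / (Real.sqrt (a.factorial) * Real.sqrt (b.factorial)) := by
    funext x; rw [normHermite_eval_eq, normHermite_eval_eq, div_mul_div_comm]
  rw [e, MeasureTheory.integral_div, hermite_orth]
  by_cases h : a = b
  · subst h
    rw [if_pos rfl, if_pos rfl, Real.mul_self_sqrt (Nat.cast_nonneg _), div_self]
    exact Nat.cast_ne_zero.mpr (Nat.factorial_ne_zero a)
  · rw [if_neg h, if_neg h, zero_div]

section PiLemmas

variable {μ : Measure ℝ} [SigmaFinite μ]

lemma integrable_pi_prod : ∀ {n : ℕ} (f : Fin n → ℝ → ℝ), (∀ i, Integrable (f i) μ) →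
    Integrable (fun x : Fin n → ℝ => ∏ i, f i (x i)) (Measure.pi fun _ => μ) := by
  intro n
  induction n with
  | zero =>
    intro f _
    simp only [Finset.univ_eq_empty, Finset.prod_empty]
    refine (integrable_const_iff).mpr (Or.inr ?_)
    constructor
    rw [Measure.pi_univ]
    simp
  | succ n ih =>
    intro f hf
    have h := ((measurePreserving_piFinSuccAbove (fun _ : Fin (n+1) => μ) 0).symm)
    rw [← h.integrable_comp_emb (MeasurableEquiv.measurableEmbedding _)]
    simp_rw [MeasurableEquiv.piFinSuccAbove_symm_apply, Fin.insertNthEquiv,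
      Fin.prod_univ_succ, Fin.insertNth_zero]
    simp only [Fin.zero_succAbove, Function.comp_def, Fin.cons_zero, Fin.cons_succ,
      Equiv.coe_fn_mk]
    exact Integrable.mul_prod (hf 0) (ih _ (fun i => hf _))

lemma integral_pi_prod : ∀ {n : ℕ} (f : Fin n → ℝ → ℝ),
    ∫ x : Fin n → ℝ, ∏ i, f i (x i) ∂(Measure.pi fun _ => μ) = ∏ i, ∫ x, f i x ∂μ := by
  intro n
  induction n with
  | zero =>
    intro f
    simp only [Finset.univ_eq_empty, Finset.prod_empty, integral_const, smul_eq_mul, mul_one]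
    rw [measureReal_def, Measure.pi_univ]
    simp
  | succ n ih =>
    intro f
    calc
      _ = ∫ x : ℝ × (Fin n → ℝ), f 0 x.1 * ∏ i : Fin n, f i.succ (x.2 i)
          ∂(μ.prod (Measure.pi fun _ => μ)) := by
        rw [← ((measurePreserving_piFinSuccAbove (fun _ : Fin (n+1) => μ) 0).symm).integral_comp']
        congr 1
        funext x
        simp_rw [MeasurableEquiv.piFinSuccAbove_symm_apply, Fin.insertNthEquiv,
          Fin.prod_univ_succ, Fin.insertNth_zero]
        simp [Fin.zero_succAbove, Fin.cons_zero, Fin.cons_succ]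
      _ = (∫ x, f 0 x ∂μ) * ∏ i : Fin n, ∫ x, f i.succ x ∂μ := by
        rw [← ih fun i => f i.succ, ← MeasureTheory.integral_prod_mul]
      _ = ∏ i, ∫ x, f i x ∂μ := by rw [Fin.prod_univ_succ]

end PiLemmas
lemma parseval (t : ℕ) (S : Finset (Fin t → ℕ)) (c : (Fin t → ℕ) → ℝ) :
    ∫ x : Fin t → ℝ, (∑ m ∈ S, c m * ∏ i, normHermite (m i) (x i)) ^ 2
      ∂(Measure.pi fun _ => gaussianReal 0 1) = ∑ m ∈ S, (c m) ^ 2 := by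
  have hint : ∀ m m' : Fin t → ℕ, Integrable
      (fun x : Fin t → ℝ => (∏ i, normHermite (m i) (x i)) * ∏ i, normHermite (m' i) (x i))
      (Measure.pi fun _ => gaussianReal 0 1) := by
    intro m m'
    have h := integrable_pi_prod
      (fun i => fun y => normHermite (m i) y * normHermite (m' i) y)
      (fun i => integrable_normHermite_mul _ _)
    exact h.congr (Filter.Eventually.of_forall fun x => by
      simp [Finset.prod_mul_distrib])
  have hval : ∀ m m' : Fin t → ℕ,
      (∫ x : Fin t → ℝ, (∏ i, normHermite (m i) (x i)) * ∏ i, normHermite (m' i) (x i)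
        ∂(Measure.pi fun _ => gaussianReal 0 1)) = if m = m' then 1 else 0 := by
    intro m m'
    rw [show (fun x : Fin t → ℝ =>
        (∏ i, normHermite (m i) (x i)) * ∏ i, normHermite (m' i) (x i))
      = fun x : Fin t → ℝ => ∏ i, (normHermite (m i) (x i) * normHermite (m' i) (x i))
      from funext fun x => (Finset.prod_mul_distrib).symm]
    refine Eq.trans (integral_pi_prod (μ := gaussianReal 0 1)
      (fun i y => normHermite (m i) y * normHermite (m' i) y)) ?_
    simp_rw [normHermite_orth]
    by_cases h : m = m'
    · subst h; simp
    · rw [if_neg h]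
      obtain ⟨i, hi⟩ : ∃ i, m i ≠ m' i := by
        by_contra hc
        push_neg at hc
        exact h (funext hc)
      exact Finset.prod_eq_zero (Finset.mem_univ i) (if_neg hi)
  calc ∫ x : Fin t → ℝ, (∑ m ∈ S, c m * ∏ i, normHermite (m i) (x i)) ^ 2
      ∂(Measure.pi fun _ => gaussianReal 0 1)
      = ∫ x : Fin t → ℝ, ∑ m ∈ S, ∑ m' ∈ S, (c m * c m') *
          ((∏ i, normHermite (m i) (x i)) * ∏ i, normHermite (m' i) (x i))
        ∂(Measure.pi fun _ => gaussianReal 0 1) := by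
        refine integral_congr_ae (Filter.Eventually.of_forall fun x => ?_)
        simp only []
        rw [sq, Finset.sum_mul_sum]
        exact Finset.sum_congr rfl fun m _ => Finset.sum_congr rfl fun m' _ => by ring
    _ = ∑ m ∈ S, ∑ m' ∈ S, (c m * c m') *
          ∫ x : Fin t → ℝ, (∏ i, normHermite (m i) (x i)) * ∏ i, normHermite (m' i) (x i)
            ∂(Measure.pi fun _ => gaussianReal 0 1) := by
        rw [MeasureTheory.integral_finset_sum _ fun m _ =>
          integrable_finset_sum _ fun m' _ => ((hint m m').const_mul _)]
        refine Finset.sum_congr rfl fun m _ => ?_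
        rw [MeasureTheory.integral_finset_sum _ fun m' _ => ((hint m m').const_mul _)]
        exact Finset.sum_congr rfl fun m' _ => MeasureTheory.integral_const_mul _ _
    _ = ∑ m ∈ S, (c m) ^ 2 := by
        refine Finset.sum_congr rfl fun m hm => ?_
        rw [Finset.sum_eq_single_of_mem m hm]
        · rw [hval, if_pos rfl, mul_one, sq]
        · intro m' _ hne
          rw [hval, if_neg (fun h => hne h.symm), mul_zero]
lemma sum_multinomial_real (t d : ℕ) :
    ∑ m ∈ Finset.Nat.antidiagonalTuple t d, (Nat.multinomial Finset.univ m : ℝ) = (t:ℝ)^d := by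
  have h := Finset.sum_pow_eq_sum_piAntidiag (Finset.univ : Finset (Fin t))
    (fun _ => (1:ℝ)) d
  rw [Finset.piAntidiag_univ_fin_eq_antidiagonalTuple] at h
  simp only [Finset.sum_const, Finset.card_univ, Fintype.card_fin, nsmul_eq_mul, mul_one,
    one_pow, Finset.prod_const_one] at h
  exact h.symm

lemma card_ml (t d : ℕ) :
    ((Finset.Nat.antidiagonalTuple t d).filter (fun m => ¬ ∃ i, 2 ≤ m i)).card
      = t.choose d := by
  have key : ((Finset.Nat.antidiagonalTuple t d).filter (fun m => ¬ ∃ i, 2 ≤ m i)).card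
      = (Finset.powersetCard d (Finset.univ : Finset (Fin t))).card := by
    refine Finset.card_bij' (fun m _ => Finset.univ.filter (fun i => m i = 1))
      (fun s _ => fun i => if i ∈ s then 1 else 0) ?_ ?_ ?_ ?_
    · intro m hm
      rw [Finset.mem_filter] at hm
      obtain ⟨hm1, hm2⟩ := hm
      rw [Finset.Nat.mem_antidiagonalTuple] at hm1
      push_neg at hm2
      rw [Finset.mem_powersetCard]
      refine ⟨Finset.filter_subset _ _ |>.trans (by simp), ?_⟩
      have hsplit := Finset.sum_filter_add_sum_filter_not Finset.univ (fun i => m i = 1) m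
      have h1 : ∑ i ∈ Finset.univ.filter (fun i => m i = 1), m i
          = (Finset.univ.filter (fun i => m i = 1)).card := by
        rw [Finset.card_eq_sum_ones]
        exact Finset.sum_congr rfl fun i hi => (Finset.mem_filter.mp hi).2
      have h2 : ∑ i ∈ Finset.univ.filter (fun i => ¬ m i = 1), m i = 0 := by
        refine Finset.sum_eq_zero fun i hi => ?_
        have := hm2 i
        have := (Finset.mem_filter.mp hi).2
        omega
      rw [h1, h2, add_zero] at hsplit
      rw [hsplit]
      exact hm1
    · intro s hs
      rw [Finset.mem_powersetCard] at hs
      rw [Finset.mem_filter, Finset.Nat.mem_antidiagonalTuple]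
      constructor
      · rw [Finset.sum_ite_mem, Finset.univ_inter, ← hs.2, Finset.card_eq_sum_ones]
      · push_neg
        intro i
        by_cases h : i ∈ s <;> simp [h]
    · intro m hm
      rw [Finset.mem_filter] at hm
      push_neg at hm
      funext i
      by_cases h : m i = 1 <;> simp [h]
      have := hm.2 i
      omega
    · intro s _
      ext i
      simp
  rw [key, Finset.card_powersetCard, Finset.card_univ, Fintype.card_fin]
lemma multinomial_ml {t d : ℕ} {m : Fin t → ℕ} (hm1 : ∑ i, m i = d) (hm2 : ∀ i, m i ≤ 1) :
    Nat.multinomial Finset.univ m = d.factorial := by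
  have hspec := Nat.multinomial_spec Finset.univ m
  have hprod : ∏ i, (m i).factorial = 1 := by
    refine Finset.prod_eq_one fun i _ => ?_
    have := hm2 i
    interval_cases h : m i <;> simp
  rw [hprod, one_mul, hm1] at hspec
  exact hspec

lemma sum_nonml (t d : ℕ) :
    ∑ m ∈ (Finset.Nat.antidiagonalTuple t d).filter (fun m => ∃ i, 2 ≤ m i),
      (Nat.multinomial Finset.univ m : ℝ)
    = (t:ℝ)^d - (t.descFactorial d : ℝ) := by
  have hsplit := Finset.sum_filter_add_sum_filter_not (Finset.Nat.antidiagonalTuple t d)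
    (fun m => ∃ i, 2 ≤ m i) (fun m => (Nat.multinomial Finset.univ m : ℝ))
  have hml : ∑ m ∈ (Finset.Nat.antidiagonalTuple t d).filter (fun m => ¬ ∃ i, 2 ≤ m i),
      (Nat.multinomial Finset.univ m : ℝ) = (t.descFactorial d : ℝ) := by
    have : ∀ m ∈ (Finset.Nat.antidiagonalTuple t d).filter (fun m => ¬ ∃ i, 2 ≤ m i),
        (Nat.multinomial Finset.univ m : ℝ) = (d.factorial : ℝ) := by
      intro m hm
      rw [Finset.mem_filter] at hm
      obtain ⟨h1, h2⟩ := hm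
      push_neg at h2
      rw [Finset.Nat.mem_antidiagonalTuple] at h1
      rw [multinomial_ml h1 (fun i => by have := h2 i; omega)]
    rw [Finset.sum_congr rfl this, Finset.sum_const, card_ml,
      Nat.descFactorial_eq_factorial_mul_choose]
    push_cast
    ring
  rw [hml, sum_multinomial_real] at hsplit
  linarith

lemma desc_bound : ∀ (d t : ℕ), d ≤ t →
    (t:ℝ)^(d+1) - (t.descFactorial (d+1) : ℝ) ≤ ((d:ℝ)+1) * d / 2 * (t:ℝ)^d := by
  intro d
  induction d with
  | zero => intro t _; simp [Nat.descFactorial]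
  | succ d ih =>
    intro t ht
    have ih' := ih t (by omega)
    have hcast : ((t.descFactorial (d+2) : ℕ) : ℝ)
        = ((t:ℝ) - ((d:ℝ)+1)) * (t.descFactorial (d+1) : ℝ) := by
      rw [Nat.descFactorial_succ, Nat.cast_mul, Nat.cast_sub (by omega)]
      push_cast
      ring
    have hle : (t.descFactorial (d+1) : ℝ) ≤ (t:ℝ)^(d+1) := by
      exact_mod_cast Nat.cast_le.mpr (Nat.descFactorial_le_pow t (d+1))
    have ht0 : (0:ℝ) ≤ (t:ℝ) := Nat.cast_nonneg t
    have htd : ((d:ℝ)+1) ≤ (t:ℝ) := by exact_mod_cast Nat.cast_le.mpr ht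
    rw [hcast]
    have h1 := mul_le_mul_of_nonneg_left ih' ht0
    have h3 := mul_le_mul_of_nonneg_left hle (show (0:ℝ) ≤ (d:ℝ)+1 by positivity)
    push_cast
    calc (t:ℝ)^(d+1+1) - ((t:ℝ) - ((d:ℝ)+1)) * (t.descFactorial (d+1) : ℝ)
        = (t:ℝ) * ((t:ℝ)^(d+1) - (t.descFactorial (d+1) : ℝ))
          + ((d:ℝ)+1) * (t.descFactorial (d+1) : ℝ) := by ring
      _ ≤ (t:ℝ) * (((d:ℝ)+1) * (d:ℝ) / 2 * (t:ℝ)^d) + ((d:ℝ)+1) * (t:ℝ)^(d+1) :=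
          add_le_add h1 h3
      _ = ((d:ℝ)+1+1) * ((d:ℝ)+1) / 2 * (t:ℝ)^(d+1) := by ring
/-- There is an absolute constant `C` such that for all `d ≥ 1`
and `t ≥ d²`, the non-multilinear part of `H_d((X₁+⋯+X_t)/√t)` satisfies
`‖H^{nml}‖₂² ≤ C d²/t` in `L²(γ_t)`. -/
theorem hermite_nonmultilinear_small :
    ∃ C : ℝ, 0 < C ∧ ∀ d t : ℕ, 1 ≤ d → d ^ 2 ≤ t →
      ∫ x, (hermiteNml t d x) ^ 2 ∂(stdGaussian t) ≤ C * (d : ℝ) ^ 2 / t := by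
  refine ⟨1, one_pos, fun d t hd hdt => ?_⟩
  have htd : d ≤ t := le_trans (by nlinarith) hdt
  have ht1 : 1 ≤ t := le_trans hd htd
  have ht0 : (0:ℝ) < (t:ℝ) := by exact_mod_cast ht1
  set S := (Finset.Nat.antidiagonalTuple t d).filter (fun m => ∃ i, 2 ≤ m i) with hS
  set c : (Fin t → ℕ) → ℝ := fun m => ((t : ℝ) ^ ((d : ℝ) / 2))⁻¹ *
      Real.sqrt ((d.factorial : ℝ) / ∏ i, ((m i).factorial : ℝ)) with hc
  have hP : ∫ x, (hermiteNml t d x) ^ 2 ∂(stdGaussian t) = ∑ m ∈ S, (c m) ^ 2 :=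
    parseval t S c
  rw [hP]
  have hcsq : ∀ m ∈ S, (c m) ^ 2 = ((t:ℝ)^d)⁻¹ * (Nat.multinomial Finset.univ m : ℝ) := by
    intro m hm
    rw [Finset.mem_filter, Finset.Nat.mem_antidiagonalTuple] at hm
    have hsum := hm.1
    have hprodpos : (0:ℝ) < ∏ i, ((m i).factorial : ℝ) := by
      refine Finset.prod_pos fun i _ => ?_
      exact_mod_cast Nat.factorial_pos (m i)
    have hA : (((t : ℝ) ^ ((d : ℝ) / 2))⁻¹)^2 = ((t:ℝ)^d)⁻¹ := by
      rw [inv_pow, ← Real.rpow_natCast ((t : ℝ) ^ ((d : ℝ) / 2)) 2, ← Real.rpow_mul ht0.le,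
        show (d:ℝ)/2 * ((2:ℕ):ℝ) = ((d:ℕ):ℝ) by push_cast; ring, Real.rpow_natCast]
    have hq : (Real.sqrt ((d.factorial : ℝ) / ∏ i, ((m i).factorial : ℝ)))^2
        = (Nat.multinomial Finset.univ m : ℝ) := by
      rw [Real.sq_sqrt (by positivity)]
      have hspec := Nat.multinomial_spec Finset.univ m
      rw [hsum] at hspec
      rw [div_eq_iff (ne_of_gt hprodpos)]
      rw [show (∏ i, ((m i).factorial : ℝ)) = ((∏ i, (m i).factorial : ℕ) : ℝ) by push_cast; rfl]
      rw [← Nat.cast_mul, mul_comm]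
      exact_mod_cast congrArg (Nat.cast : ℕ → ℝ) hspec.symm
    rw [hc, mul_pow, hA, hq]
  rw [Finset.sum_congr rfl hcsq, ← Finset.mul_sum, hS, sum_nonml]
  obtain ⟨e, rfl⟩ : ∃ e, d = e + 1 := ⟨d - 1, by omega⟩
  have hbound := desc_bound e t (by omega)
  have hinv : (0:ℝ) ≤ ((t:ℝ)^(e+1))⁻¹ := by positivity
  have hte : (0:ℝ) < (t:ℝ)^e := by positivity
  calc ((t:ℝ)^(e+1))⁻¹ * ((t:ℝ)^(e+1) - (t.descFactorial (e+1) : ℝ))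
      ≤ ((t:ℝ)^(e+1))⁻¹ * (((e:ℝ)+1) * (e:ℝ) / 2 * (t:ℝ)^e) :=
        mul_le_mul_of_nonneg_left hbound hinv
    _ = ((e:ℝ)+1) * (e:ℝ) / 2 / (t:ℝ) := by
        rw [pow_succ]
        field_simp
    _ ≤ 1 * ((e:ℝ)+1) ^ 2 / (t:ℝ) := by
        gcongr
        nlinarith [Nat.cast_nonneg (α := ℝ) e]
    _ = 1 * (((e+1 : ℕ)):ℝ) ^ 2 / (t:ℝ) := by push_cast; ring
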